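/- Let V be a finite-dimensional vector space over ℂ with a decomposition V = ⊕_{μ ∈ I} V_μ into weight spaces for an abelian Lie algebra 𝔥 acting diagonalizably, and let μ ≠ 0 be a weight. Fix n ≥ 1 and define D^n : S^n(𝔥) ⊗ V → S^{n-1}(𝔥) ⊗ V by D^n(X_1⋯X_n ⊗ v) = Σ_i X_1⋯X̂_i⋯X_n ⊗ X_i·v. Then S^{n-1}(𝔥) ⊗ V_μ is contained in the image of D^n. -/

import Mathlib

/- STATEMENT 0: For a finite-dimensional abelian complex Lie algebra 𝔥 acting diagonalizably
on a finite-dimensional vector space V (i.e. V is the sum of its weight spaces), a nonzero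
weight μ, and the map Dⁿ : Sⁿ(𝔥) ⊗ V → Sⁿ⁻¹(𝔥) ⊗ V (n = m+1 ≥ 1) given by
X₁⋯Xₙ ⊗ v ↦ Σᵢ X₁⋯X̂ᵢ⋯Xₙ ⊗ Xᵢ·v, the subspace Sⁿ⁻¹(𝔥) ⊗ V_μ is contained in the image. -/

open TensorProduct

/-- Relations defining the symmetric power as a quotient of the tensor power. -/
noncomputable def symRel (n : ℕ) (M : Type) [AddCommGroup M] [Module ℂ M] :
    Submodule ℂ (⨂[ℂ]^n M) :=
  Submodule.span ℂ {x | ∃ (f : Fin n → M) (i j : Fin n),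
    x = PiTensorProduct.tprod ℂ f - PiTensorProduct.tprod ℂ (f ∘ Equiv.swap i j)}

/-- The `n`-th symmetric power of a complex vector space. -/
abbrev SymPow (n : ℕ) (M : Type) [AddCommGroup M] [Module ℂ M] :=
  (⨂[ℂ]^n M) ⧸ symRel n M

/-- Canonical projection from the tensor power to the symmetric power. -/
noncomputable def symMk (n : ℕ) (M : Type) [AddCommGroup M] [Module ℂ M] :
    (⨂[ℂ]^n M) →ₗ[ℂ] SymPow n M := (symRel n M).mkQ

/-- The product X₁X₂⋯Xₙ in the symmetric power. -/
noncomputable def symProd (n : ℕ) (M : Type) [AddCommGroup M] [Module ℂ M] (f : Fin n → M) :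
    SymPow n M := symMk n M (PiTensorProduct.tprod ℂ f)

/-- The weight space of a Lie algebra module for the weight μ (simultaneous eigenspace). -/
noncomputable def wtSpace (𝔥 V : Type) [LieRing 𝔥] [LieAlgebra ℂ 𝔥] [AddCommGroup V]
    [Module ℂ V] [LieRingModule 𝔥 V] [LieModule ℂ 𝔥 V] (μ : Module.Dual ℂ 𝔥) :
    Submodule ℂ V :=
  ⨅ H : 𝔥, Module.End.eigenspace (LieModule.toEnd ℂ 𝔥 V H) (μ H)

lemma symProd_swap (n : ℕ) (M : Type) [AddCommGroup M] [Module ℂ M] (f : Fin n → M)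
    (i j : Fin n) : symProd n M (f ∘ Equiv.swap i j) = symProd n M f := by
  have h : (PiTensorProduct.tprod ℂ f : ⨂[ℂ]^n M) - PiTensorProduct.tprod ℂ (f ∘ Equiv.swap i j)
      ∈ symRel n M := Submodule.subset_span ⟨f, i, j, rfl⟩
  simpa [symProd, symMk, Submodule.mkQ_apply, eq_comm] using
    (Submodule.Quotient.eq (symRel n M)).mpr h

lemma symProd_perm (n : ℕ) (M : Type) [AddCommGroup M] [Module ℂ M]
    (e : Equiv.Perm (Fin n)) : ∀ f : Fin n → M, symProd n M (f ∘ e) = symProd n M f := by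
  refine Equiv.Perm.swap_induction_on e (fun f => rfl) ?_
  intro σ i j hij ih f
  have hc : f ∘ (Equiv.swap i j * σ) = (f ∘ Equiv.swap i j) ∘ σ := rfl
  rw [hc, ih (f ∘ Equiv.swap i j), symProd_swap]

lemma symProd_cons_eq (n : ℕ) (M : Type) [AddCommGroup M] [Module ℂ M]
    (f : Fin (n + 1) → M) (j : Fin (n + 1)) :
    symProd (n + 1) M (Fin.cons (f j) (f ∘ j.succAbove)) = symProd (n + 1) M f := by
  have he : f ∘ ((finSuccEquiv n).trans (finSuccEquiv' j).symm : Equiv.Perm (Fin (n+1)))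
      = Fin.cons (f j) (f ∘ j.succAbove) := by
    funext k
    induction k using Fin.cases with
    | zero => simp [finSuccEquiv_zero]
    | succ l => simp [finSuccEquiv_succ]
  rw [← he, symProd_perm]

theorem statement0 (𝔥 V : Type) [LieRing 𝔥] [LieAlgebra ℂ 𝔥] [IsLieAbelian 𝔥]
    [AddCommGroup V] [Module ℂ V] [LieRingModule 𝔥 V] [LieModule ℂ 𝔥 V]
    [FiniteDimensional ℂ 𝔥] [FiniteDimensional ℂ V]
    (hdiag : ⨆ μ : Module.Dual ℂ 𝔥, wtSpace 𝔥 V μ = ⊤)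
    (μ : Module.Dual ℂ 𝔥) (hμ : μ ≠ 0) (m : ℕ)
    (D : (SymPow (m + 1) 𝔥 ⊗[ℂ] V) →ₗ[ℂ] SymPow m 𝔥 ⊗[ℂ] V)
    (hD : ∀ (f : Fin (m + 1) → 𝔥) (v : V),
      D (symProd (m + 1) 𝔥 f ⊗ₜ[ℂ] v) =
        ∑ i : Fin (m + 1), symProd m 𝔥 (f ∘ i.succAbove) ⊗ₜ[ℂ] ⁅f i, v⁆) :
    ∀ (t : ⨂[ℂ]^m 𝔥) (v : V), v ∈ wtSpace 𝔥 V μ →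
      symMk m 𝔥 t ⊗ₜ[ℂ] v ∈ LinearMap.range D := by
  obtain ⟨H, hH⟩ : ∃ H : 𝔥, μ H ≠ 0 := by
    by_contra h
    push_neg at h
    exact hμ (LinearMap.ext fun x => h x)
  intro t v hv
  have hv' : ∀ X : 𝔥, ⁅X, v⁆ = μ X • v := by
    intro X
    have hv2 : v ∈ ⨅ H : 𝔥, Module.End.eigenspace (LieModule.toEnd ℂ 𝔥 V H) (μ H) := hv
    have h1 := (Submodule.mem_iInf _).mp hv2 X
    rw [Module.End.mem_eigenspace_iff] at h1
    simpa using h1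
  -- key computation for "good" tuples
  have key : ∀ g : Fin m → 𝔥, (∀ j, g j = H ∨ μ (g j) = 0) →
      symProd m 𝔥 g ⊗ₜ[ℂ] v ∈ LinearMap.range D := by
    intro g hg
    have hterm : ∀ j : Fin m,
        symProd m 𝔥 ((Fin.cons H g : Fin (m+1) → 𝔥) ∘ (Fin.succ j).succAbove) ⊗ₜ[ℂ]
            ⁅(Fin.cons H g : Fin (m+1) → 𝔥) j.succ, v⁆
          = μ (g j) • (symProd m 𝔥 g ⊗ₜ[ℂ] v) := by
      intro j
      have hm : m ≠ 0 := fun h => (h ▸ j).elim0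
      obtain ⟨k, rfl⟩ := Nat.exists_eq_succ_of_ne_zero hm
      have hcomp : (Fin.cons H g : Fin (k+2) → 𝔥) ∘ (Fin.succ j).succAbove
          = Fin.cons H (g ∘ j.succAbove) := by
        funext l
        induction l using Fin.cases with
        | zero => simp [Fin.succ_succAbove_zero]
        | succ l => simp [Fin.succ_succAbove_succ]
      rw [hcomp, Fin.cons_succ, hv', tmul_smul]
      rcases hg j with h | h
      · congr 2
        have h2 : (Fin.cons H (g ∘ j.succAbove) : Fin (k+1) → 𝔥) = Fin.cons (g j) (g ∘ j.succAbove) := by rw [h]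
        rw [h2]
        exact symProd_cons_eq k 𝔥 g j
      · rw [h, zero_smul, zero_smul]
    have hzero : (Fin.cons H g : Fin (m+1) → 𝔥) ∘ (0 : Fin (m+1)).succAbove = g := by
      funext k
      simp [Fin.succAbove_zero]
    have hsum : D (symProd (m + 1) 𝔥 (Fin.cons H g) ⊗ₜ[ℂ] v)
        = (μ H + ∑ j : Fin m, μ (g j)) • (symProd m 𝔥 g ⊗ₜ[ℂ] v) := by
      rw [hD, Fin.sum_univ_succ, hzero, Fin.cons_zero, hv', tmul_smul]
      rw [Finset.sum_congr rfl (fun j _ => hterm j), ← Finset.sum_smul, add_smul]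
    set c : ℂ := μ H + ∑ j : Fin m, μ (g j) with hc
    have hcne : c ≠ 0 := by
      classical
      have hsum2 : ∑ j : Fin m, μ (g j)
          = (((Finset.univ.filter (fun j => μ (g j) ≠ 0)).card : ℕ) : ℂ) * μ H := by
        calc ∑ j : Fin m, μ (g j)
            = ∑ j ∈ Finset.univ.filter (fun j => μ (g j) ≠ 0), μ (g j) :=
              (Finset.sum_filter_ne_zero _).symm
          _ = ∑ _j ∈ Finset.univ.filter (fun j => μ (g j) ≠ 0), μ H := by
              refine Finset.sum_congr rfl fun j hj => ?_
              rcases hg j with h | h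
              · rw [h]
              · exact absurd h (Finset.mem_filter.mp hj).2
          _ = _ := by rw [Finset.sum_const, nsmul_eq_mul]
      have hc2 : c = ((1 + (Finset.univ.filter (fun j => μ (g j) ≠ 0)).card : ℕ) : ℂ) * μ H := by
        rw [hc, hsum2]; push_cast; ring
      rw [hc2]
      exact mul_ne_zero (Nat.cast_ne_zero.mpr (by omega)) hH
    have : symProd m 𝔥 g ⊗ₜ[ℂ] v
        = c⁻¹ • D (symProd (m + 1) 𝔥 (Fin.cons H g) ⊗ₜ[ℂ] v) := by
      rw [hsum, smul_smul, inv_mul_cancel₀ hcne, one_smul]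
    rw [this]
    exact Submodule.smul_mem _ _ ⟨_, rfl⟩
  -- reduce the general case to good tuples
  classical
  set L : (⨂[ℂ]^m 𝔥) →ₗ[ℂ] SymPow m 𝔥 ⊗[ℂ] V :=
    ((TensorProduct.mk ℂ (SymPow m 𝔥) V).flip v).comp (symMk m 𝔥) with hL
  have hLapp : ∀ x : ⨂[ℂ]^m 𝔥, L x = symMk m 𝔥 x ⊗ₜ[ℂ] v := fun x => rfl
  suffices h : t ∈ Submodule.comap L (LinearMap.range D) by
    simpa [Submodule.mem_comap, hLapp] using h
  have htop : Submodule.span ℂ (Set.range (PiTensorProduct.tprod ℂ (s := fun _ : Fin m => 𝔥)))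
      ≤ Submodule.comap L (LinearMap.range D) := by
    rw [Submodule.span_le]
    rintro _ ⟨f, rfl⟩
    -- expand f multilinearly
    set a : Fin m → 𝔥 := fun j => (μ (f j) / μ H) • H with ha
    set b : Fin m → 𝔥 := fun j => f j - a j with hb
    have hfab : f = fun j => a j + b j := by funext j; simp [hb]
    have hμb : ∀ j, μ (b j) = 0 := by
      intro j
      simp only [hb, ha, map_sub, map_smul, smul_eq_mul]
      field_simp
      simp
    have hexp : (PiTensorProduct.tprod ℂ f : ⨂[ℂ]^m 𝔥)
        = ∑ s : Finset (Fin m), PiTensorProduct.tprod ℂ (s.piecewise a b) := by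
      conv_lhs => rw [hfab]
      exact MultilinearMap.map_add_univ (PiTensorProduct.tprod ℂ) a b
    rw [hexp]
    refine Submodule.sum_mem _ fun s _ => ?_
    have hpw : s.piecewise a b
        = fun j => (if j ∈ s then μ (f j) / μ H else 1) • (if j ∈ s then H else b j) := by
      funext j
      by_cases hj : j ∈ s <;> simp [Finset.piecewise, hj, ha]
    rw [hpw, MultilinearMap.map_smul_univ]
    refine Submodule.smul_mem _ _ ?_
    rw [Submodule.mem_comap, hLapp]
    exact key _ (fun j => by by_cases hj : j ∈ s <;> simp [hj, hμb j])
  exact htop (by rw [PiTensorProduct.span_tprod_eq_top]; trivial)
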